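/- Let κ be regular uncountable, E ⊆ κ, and let P[E] be the forcing whose conditions are closed bounded subsets of E ordered by end-extension. If E is fat (for every δ < κ and club C ⊆ κ there is a closed s ⊆ C ∩ E of order type δ), then for every δ < κ the set of conditions of order type ≥ δ is dense in P[E]. -/

import Mathlib

/-- `C` is a closed unbounded (club) subset of the ordinal `κ`. -/
def IsClubIn (C : Set Ordinal) (κ : Ordinal) : Prop :=
  C ⊆ Set.Iio κ ∧
  (∀ t ⊆ C, t.Nonempty → sSup t < κ → sSup t ∈ C) ∧
  ∀ α < κ, ∃ β ∈ C, α < β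

/-- `s` is closed (below its supremum). -/
def IsClosedSubSup (s : Set Ordinal) : Prop :=
  ∀ t ⊆ s, t.Nonempty → sSup t < sSup s → sSup t ∈ s

/-- `E` is fat in `κ`: for every `δ < κ` and club `C ⊆ κ` there is a closed
`s ⊆ C ∩ E` of order type `δ`. -/
def IsFatIn (E : Set Ordinal) (κ : Ordinal) : Prop :=
  ∀ δ < κ, ∀ C, IsClubIn C κ →
    ∃ s, s ⊆ C ∩ E ∧ IsClosedSubSup s ∧ Nonempty (↥(Set.Iio δ) ≃o ↥s)

/-- A condition of the club-shooting forcing `P[E]`: a closed bounded subset of `E`. -/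
def IsCondition (E : Set Ordinal) (κ : Ordinal) (d : Set Ordinal) : Prop :=
  d ⊆ E ∧ (∀ t ⊆ d, t.Nonempty → sSup t ∈ d) ∧ sSup d < κ

/-- `d'` end-extends `d`. -/
def EndExt (d d' : Set Ordinal) : Prop :=
  d ⊆ d' ∧ ∀ x ∈ d', x ∉ d → ∀ y ∈ d, y < x

/-- If `E` is fat then for every `δ < κ` the conditions of order type `≥ δ`
are dense in `P[E]`. -/
theorem stmt8 (κ : Cardinal) (hreg : κ.IsRegular) (hunc : Cardinal.aleph0 < κ)
    (E : Set Ordinal) (hE : E ⊆ Set.Iio κ.ord)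
    (hfat : IsFatIn E κ.ord) :
    ∀ δ < κ.ord, ∀ d, IsCondition E κ.ord d →
      ∃ d', IsCondition E κ.ord d' ∧ EndExt d d' ∧
        Nonempty (↥(Set.Iio δ) ↪o ↥d') := by

  intro δ hδ d hd
  obtain ⟨hdE, hdcl, hdsup⟩ := hd
  have hlim : Order.IsSuccLimit κ.ord := Cardinal.isSuccLimit_ord hunc.le
  have hsucc : ∀ {a : Ordinal}, a < κ.ord → a + 1 < κ.ord := by
    intro a ha
    rw [Ordinal.add_one_eq_succ]
    exact hlim.succ_lt ha
  have hδ1 : δ + 1 < κ.ord := hsucc hδ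
  set C : Set Ordinal := Set.Ioo (sSup d) κ.ord with hCdef
  have hclub : IsClubIn C κ.ord := by
    refine ⟨fun x hx => hx.2, ?_, ?_⟩
    · intro t ht hne hlt
      obtain ⟨a, ha⟩ := hne
      have hbdd : BddAbove t := ⟨κ.ord, fun x hx => (ht hx).2.le⟩
      exact ⟨lt_of_lt_of_le (ht ha).1 (le_csSup hbdd ha), hlt⟩
    · intro α hα
      refine ⟨max α (sSup d) + 1, ⟨?_, hsucc (max_lt hα hdsup)⟩, ?_⟩
      · exact lt_of_le_of_lt (le_max_right _ _) (lt_add_one _)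
      · exact lt_of_le_of_lt (le_max_left _ _) (lt_add_one _)
  obtain ⟨s, hsCE, hscl, ⟨e⟩⟩ := hfat (δ + 1) hδ1 C hclub
  have hδmem : δ ∈ Set.Iio (δ + 1) := lt_add_one δ
  set m : Ordinal := (e ⟨δ, hδmem⟩ : Ordinal) with hmdef
  have hms : m ∈ s := (e ⟨δ, hδmem⟩).2
  have hmax : ∀ x ∈ s, x ≤ m := by
    intro x hx
    have h1 : (e.symm ⟨x, hx⟩ : Ordinal) < δ + 1 := (e.symm ⟨x, hx⟩).2
    have h2 : e.symm ⟨x, hx⟩ ≤ (⟨δ, hδmem⟩ : Set.Iio (δ + 1)) := by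
      have h1b : (e.symm ⟨x, hx⟩ : Ordinal) ≤ δ := Order.le_of_lt_add_one h1
      exact Subtype.coe_le_coe.mp h1b
    have h3 := e.monotone h2
    rw [e.apply_symm_apply] at h3
    exact h3
  have hgt : ∀ x ∈ s, sSup d < x := fun x hx => (hsCE hx).1.1
  have hsκ : ∀ x ∈ s, x < κ.ord := fun x hx => (hsCE hx).1.2
  have hbddd : BddAbove d := ⟨κ.ord, fun x hx => (hE (hdE hx)).le⟩
  have hdle : ∀ y ∈ d, y ≤ sSup d := fun y hy => le_csSup hbddd hy
  refine ⟨d ∪ s, ⟨?_, ?_, ?_⟩, ⟨Set.subset_union_left, ?_⟩, ⟨?_⟩⟩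
  · exact Set.union_subset hdE (fun x hx => (hsCE hx).2)
  · intro t ht hne
    by_cases hts : (t ∩ s).Nonempty
    · obtain ⟨a, hat, has⟩ := hts
      have hbddts : BddAbove (t ∩ s) := ⟨m, fun x hx => hmax x hx.2⟩
      have hbddt : BddAbove t := ⟨m, fun x hx => by
        rcases ht hx with h | h
        · exact le_trans (hdle x h) (le_of_lt (hgt m hms))
        · exact hmax x h⟩
      have heq : sSup t = sSup (t ∩ s) := by
        apply le_antisymm
        · apply csSup_le hne
          intro x hx
          rcases Classical.em (x ∈ s) with hxs | hxs
          · exact le_csSup hbddts ⟨hx, hxs⟩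
          · have hxd : x ∈ d := (ht hx).resolve_right hxs
            calc x ≤ sSup d := hdle x hxd
              _ ≤ a := le_of_lt (hgt a has)
              _ ≤ sSup (t ∩ s) := le_csSup hbddts ⟨hat, has⟩
        · exact csSup_le_csSup hbddt ⟨a, hat, has⟩ Set.inter_subset_left
      rw [heq]
      rcases lt_or_ge (sSup (t ∩ s)) (sSup s) with hlt | hge
      · exact Or.inr (hscl (t ∩ s) Set.inter_subset_right ⟨a, hat, has⟩ hlt)
      · have hsups : sSup s = m := le_antisymm (csSup_le ⟨m, hms⟩ hmax)
          (le_csSup ⟨m, hmax⟩ hms)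
        have h1 : sSup (t ∩ s) ≤ m :=
          csSup_le ⟨a, hat, has⟩ (fun x hx => hmax x hx.2)
        have : sSup (t ∩ s) = m := le_antisymm h1 (hsups ▸ hge)
        exact Or.inr (this ▸ hms)
    · have htd : t ⊆ d := fun x hx =>
        (ht hx).resolve_right (fun h => hts ⟨x, hx, h⟩)
      exact Or.inl (hdcl t htd hne)
  · have : sSup (d ∪ s) ≤ m := by
      apply csSup_le ⟨m, Or.inr hms⟩
      intro x hx
      rcases hx with h | h
      · exact le_trans (hdle x h) (le_of_lt (hgt m hms))
      · exact hmax x h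
    exact lt_of_le_of_lt this (hsκ m hms)
  · intro x hx hxd y hy
    rcases hx with h | h
    · exact absurd h hxd
    · exact lt_of_le_of_lt (hdle y hy) (hgt x h)
  · refine OrderEmbedding.ofStrictMono
      (fun a => ⟨(e ⟨a.1, lt_trans a.2 (lt_add_one δ)⟩ : Ordinal),
        Or.inr (e ⟨a.1, lt_trans a.2 (lt_add_one δ)⟩).2⟩) ?_
    intro a b hab
    have : (⟨a.1, lt_trans a.2 (lt_add_one δ)⟩ : Set.Iio (δ + 1)) <
        ⟨b.1, lt_trans b.2 (lt_add_one δ)⟩ := hab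
    exact e.strictMono this
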